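/- Let H : ℝ² → M_n(ℂ) be differentiable at 0 with H(k) Hermitian for every k. Let S ∈ M_n(ℂ) be unitary and Ŝ ∈ M₂(ℝ) be such that S·H(k)·S* = H(Ŝk) for all k in a neighborhood of 0. Let e ∈ ℝ² be an eigenvector of Ŝ with real eigenvalue μ, and let D ∈ M_n(ℂ) denote the directional derivative of H at 0 in the direction e. Then: (i) if μ = 1, D commutes with S, and hence D maps each eigenspace of S into itself; (ii) if μ ≠ 1, then for any vectors u, v ∈ ℂⁿ belonging to the same eigenspace of S (i.e., Su = su and Sv = sv for some s ∈ ℂ), one has ⟨u, Dv⟩ = 0; hence D maps each eigenspace of S into its orthogonal complement. -/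

import Mathlib

open Matrix

/-- Perturbation around a degenerate point with a unitary space symmetry `S`:
the directional derivative of the Bloch Hamiltonian along an eigendirection of
the induced quasimomentum action `Ŝ` either commutes with `S` (eigenvalue 1,
preserving eigenspaces of `S`) or maps each eigenspace of `S` into its
orthogonal complement (eigenvalue ≠ 1). -/
theorem stmt13 {n : ℕ} (H : (Fin 2 → ℝ) → Matrix (Fin n) (Fin n) ℂ)
    (hdiff : ∀ i j, DifferentiableAt ℝ (fun k => H k i j) 0)
    (hherm : ∀ k, (H k).IsHermitian)
    (S : Matrix (Fin n) (Fin n) ℂ) (hS1 : Sᴴ * S = 1) (hS2 : S * Sᴴ = 1)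
    (Shat : Matrix (Fin 2) (Fin 2) ℝ)
    (hcov : ∀ᶠ k in nhds (0 : Fin 2 → ℝ), S * H k * Sᴴ = H (Shat.mulVec k))
    (e : Fin 2 → ℝ) (he0 : e ≠ 0) (μ : ℝ) (he : Shat.mulVec e = μ • e)
    (D : Matrix (Fin n) (Fin n) ℂ)
    (hD : ∀ i j, D i j = fderiv ℝ (fun k => H k i j) 0 e) :
    (μ = 1 → D * S = S * D ∧
      ∀ (s : ℂ) (v : Fin n → ℂ), S.mulVec v = s • v →
        S.mulVec (D.mulVec v) = s • D.mulVec v) ∧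
    (μ ≠ 1 → ∀ (s : ℂ) (u v : Fin n → ℂ), S.mulVec u = s • u → S.mulVec v = s • v →
      dotProduct (star u) (D.mulVec v) = 0) := by
  set f' : Fin n → Fin n → ((Fin 2 → ℝ) →L[ℝ] ℂ) :=
    fun i j => fderiv ℝ (fun k => H k i j) 0 with hf'
  have hfd : ∀ i j, HasFDerivAt (fun k => H k i j) (f' i j) 0 :=
    fun i j => (hdiff i j).hasFDerivAt
  set L : (Fin 2 → ℝ) →L[ℝ] (Fin 2 → ℝ) :=
    LinearMap.toContinuousLinearMap (Matrix.mulVecLin Shat) with hL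
  have hLapp : ∀ k, L k = Shat.mulVec k := fun k => rfl
  -- key matrix identity : S * D * Sᴴ = μ • D
  have key : S * D * Sᴴ = (μ : ℂ) • D := by
    ext i j
    have hLHS : HasFDerivAt (fun k => (S * H k * Sᴴ) i j)
        (∑ b, ∑ a, (S i a * Sᴴ b j) • f' a b) 0 := by
      have heq : (fun k => (S * H k * Sᴴ) i j)
          = fun k => ∑ b, ∑ a, (S i a * Sᴴ b j) • H k a b := by
        funext k
        simp only [Matrix.mul_apply, Finset.sum_mul, smul_eq_mul]
        exact Finset.sum_congr rfl fun b _ => Finset.sum_congr rfl fun a _ => by ring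
      rw [heq]
      exact HasFDerivAt.fun_sum fun b _ => HasFDerivAt.fun_sum fun a _ =>
        (hfd a b).fun_const_smul _
    have hRHS : HasFDerivAt (fun k => (S * H k * Sᴴ) i j) ((f' i j).comp L) 0 := by
      have hLd : HasFDerivAt (fun k => Shat.mulVec k) L 0 := L.hasFDerivAt
      have hg : HasFDerivAt (fun k => H k i j) (f' i j) (Shat.mulVec 0) := by
        rw [Matrix.mulVec_zero]; exact hfd i j
      have hcomp : HasFDerivAt (fun k => H (Shat.mulVec k) i j) ((f' i j).comp L) 0 :=
        hg.comp 0 hLd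
      refine hcomp.congr_of_eventuallyEq ?_
      exact hcov.mono fun k hk => congrFun (congrFun hk i) j
    have huniq := hLHS.unique hRHS
    have happ := congrArg (fun (T : (Fin 2 → ℝ) →L[ℝ] ℂ) => T e) huniq
    simp only [ContinuousLinearMap.sum_apply, ContinuousLinearMap.smul_apply,
      ContinuousLinearMap.comp_apply] at happ
    have hLe : L e = μ • e := by rw [hLapp, he]
    rw [hLe, (f' i j).map_smul] at happ
    have hval : (S * D * Sᴴ) i j = ∑ b, ∑ a, (S i a * Sᴴ b j) • (f' a b e) := by
      simp only [Matrix.mul_apply, Finset.sum_mul, smul_eq_mul]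
      refine Finset.sum_congr rfl fun b _ => Finset.sum_congr rfl fun a _ => ?_
      rw [← hD a b]; ring
    rw [hval, happ, Matrix.smul_apply, hD i j, Complex.real_smul, smul_eq_mul]
  -- consequence: S * D = μ • (D * S)
  have key2 : S * D = (μ : ℂ) • (D * S) := by
    calc S * D = S * D * 1 := by rw [mul_one]
    _ = S * D * (Sᴴ * S) := by rw [hS1]
    _ = (S * D * Sᴴ) * S := by rw [mul_assoc (S * D)]
    _ = ((μ : ℂ) • D) * S := by rw [key]
    _ = (μ : ℂ) • (D * S) := by rw [smul_mul_assoc]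
  constructor
  · intro hμ1
    have hcomm : S * D = D * S := by
      rw [key2, hμ1]; simp
    refine ⟨hcomm.symm, fun s v hv => ?_⟩
    rw [Matrix.mulVec_mulVec, hcomm, ← Matrix.mulVec_mulVec, hv, Matrix.mulVec_smul]
  · intro hμ s u v hu hv
    by_cases hu0 : u = 0
    · simp [hu0]
    -- star u ⬝ᵥ u ≠ 0
    have hne : star u ⬝ᵥ u ≠ 0 := by
      have hcoe : star u ⬝ᵥ u = ((∑ i, Complex.normSq (u i) : ℝ) : ℂ) := by
        push_cast
        simp only [dotProduct, Pi.star_apply]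
        exact Finset.sum_congr rfl fun i _ =>
          (Complex.normSq_eq_conj_mul_self (z := u i)).symm ▸ rfl
      rw [hcoe]
      intro hzero
      apply hu0
      have hr : (∑ i, Complex.normSq (u i) : ℝ) = 0 := by exact_mod_cast hzero
      have := (Finset.sum_eq_zero_iff_of_nonneg
        (fun i _ => Complex.normSq_nonneg (u i))).mp hr
      funext i
      exact Complex.normSq_eq_zero.mp (this i (Finset.mem_univ i))
    -- |s|² = 1
    have hss : (starRingEnd ℂ) s * s = 1 := by
      have h1 : star (S.mulVec u) ⬝ᵥ S.mulVec u = star u ⬝ᵥ u := by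
        rw [Matrix.star_mulVec, ← Matrix.dotProduct_mulVec, Matrix.mulVec_mulVec, hS1,
          Matrix.one_mulVec]
      rw [hu, star_smul, smul_dotProduct, dotProduct_smul,
        smul_smul, smul_eq_mul] at h1
      have h1' := mul_right_cancel₀ hne (h1.trans (one_mul (star u ⬝ᵥ u)).symm)
      simpa [Complex.star_def] using h1'
    set x : ℂ := star u ⬝ᵥ D.mulVec v with hx
    have hstar : (starRingEnd ℂ) s • star u = star (S.mulVec u) := by
      rw [hu, star_smul]; rfl
    have hmain : (starRingEnd ℂ) s * (star u ⬝ᵥ (S * D).mulVec v) = x := by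
      rw [← smul_eq_mul, ← smul_dotProduct, hstar, Matrix.star_mulVec,
        ← Matrix.mulVec_mulVec, Matrix.dotProduct_mulVec, Matrix.vecMul_vecMul, hS1,
        Matrix.vecMul_one]
    have hmain2 : star u ⬝ᵥ (S * D).mulVec v = (μ : ℂ) * (s * x) := by
      rw [key2, Matrix.smul_mulVec, dotProduct_smul, ← Matrix.mulVec_mulVec,
        hv, Matrix.mulVec_smul, dotProduct_smul]
      simp [smul_eq_mul, hx]
    rw [hmain2] at hmain
    have hxx : x = (μ : ℂ) * x := by
      calc x = (starRingEnd ℂ) s * ((μ:ℂ) * (s * x)) := hmain.symm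
      _ = (μ:ℂ) * (((starRingEnd ℂ) s * s) * x) := by ring
      _ = (μ:ℂ) * x := by rw [hss, one_mul]
    have hfac : ((μ : ℂ) - 1) * x = 0 := by linear_combination -hxx
    rcases mul_eq_zero.mp hfac with h | h
    · exfalso
      apply hμ
      have : (μ : ℂ) = 1 := by linear_combination h
      exact_mod_cast this
    · exact h
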